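/- Let m be a natural number with 1 ≤ m ≤ 5 and define m uniformly spaced ring lights at elevation 45° by l_k = (cos(2πk/m)/√2, sin(2πk/m)/√2, 1/√2) for k = 0, 1, …, m − 1. Then there exists a unit vector n ∈ ℝ³ with n₃ > 0 such that the number of indices k with ⟪n, l_k⟫ > 0 is at most 2. Hence six is the minimum number of uniformly spaced ring lights guaranteeing that every point of the open upper hemisphere is illuminated by at least three lights. -/
import Mathlib

open scoped RealInnerProductSpace Classical

noncomputable def ringLight (θ : ℝ) : EuclideanSpace ℝ (Fin 3) :=
  (EuclideanSpace.equiv (Fin 3) ℝ).symm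
    ![Real.cos θ / Real.sqrt 2, Real.sin θ / Real.sqrt 2, 1 / Real.sqrt 2]

lemma inner_ringLight (a b c θ : ℝ) :
    ⟪((EuclideanSpace.equiv (Fin 3) ℝ).symm ![a,b,c] : EuclideanSpace ℝ (Fin 3)),
      ringLight θ⟫ = (a * Real.cos θ + b * Real.sin θ + c) / Real.sqrt 2 := by
  simp [ringLight, PiLp.inner_apply, Fin.sum_univ_three, RCLike.inner_apply]
  ring

lemma norm_abc (a b c : ℝ) :
    ‖((EuclideanSpace.equiv (Fin 3) ℝ).symm ![a,b,c] : EuclideanSpace ℝ (Fin 3))‖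
      = Real.sqrt (a^2 + b^2 + c^2) := by
  simp [EuclideanSpace.norm_eq, Fin.sum_univ_three]

lemma not_pos_inner (a b c θ : ℝ) (h : a * Real.cos θ + b * Real.sin θ + c ≤ 0) :
    ¬ 0 < ⟪((EuclideanSpace.equiv (Fin 3) ℝ).symm ![a,b,c] : EuclideanSpace ℝ (Fin 3)),
      ringLight θ⟫ := by
  rw [inner_ringLight]
  exact not_lt.2 (div_nonpos_iff.2 (Or.inr ⟨h, Real.sqrt_nonneg 2⟩))

lemma apply_two (a b c : ℝ) :
    ((EuclideanSpace.equiv (Fin 3) ℝ).symm ![a,b,c] : EuclideanSpace ℝ (Fin 3)) 2 = c := rfl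

/-- For every `m` with `1 ≤ m ≤ 5`, the `m` uniformly spaced ring
lights at elevation 45° (azimuths `2πk/m`, `k = 0, …, m−1`) fail to illuminate some
point of the open upper hemisphere three times: there is a unit normal `n` with
`n₃ > 0` illuminated by at most `2` of the lights. -/
theorem five_or_fewer_ring_lights_insufficient (m : ℕ) (hm1 : 1 ≤ m) (hm5 : m ≤ 5) :
    ∃ n : EuclideanSpace ℝ (Fin 3), ‖n‖ = 1 ∧ 0 < n 2 ∧
      ((Finset.range m).filter
        (fun k : ℕ => 0 < ⟪n, ringLight (2 * Real.pi * k / m)⟫)).card ≤ 2 := by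
  interval_cases m
  -- m = 1
  · refine ⟨(EuclideanSpace.equiv (Fin 3) ℝ).symm ![0,0,1], ?_, ?_, ?_⟩
    · rw [norm_abc]; norm_num
    · rw [apply_two]; norm_num
    · exact le_trans (Finset.card_filter_le _ _) (by simp)
  -- m = 2
  · refine ⟨(EuclideanSpace.equiv (Fin 3) ℝ).symm ![0,0,1], ?_, ?_, ?_⟩
    · rw [norm_abc]; norm_num
    · rw [apply_two]; norm_num
    · exact le_trans (Finset.card_filter_le _ _) (by simp)
  -- m = 3
  · refine ⟨(EuclideanSpace.equiv (Fin 3) ℝ).symm ![-(4/5),0,3/5], ?_, ?_, ?_⟩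
    · rw [norm_abc]; norm_num
    · rw [apply_two]; norm_num
    · have h0 : ¬ 0 < ⟪((EuclideanSpace.equiv (Fin 3) ℝ).symm ![-(4/5),0,3/5] :
          EuclideanSpace ℝ (Fin 3)), ringLight (2 * Real.pi * (0:ℕ) / (3:ℕ))⟫ := by
        apply not_pos_inner
        have : (2 * Real.pi * ((0:ℕ):ℝ) / ((3:ℕ):ℝ)) = 0 := by push_cast; ring
        rw [this, Real.cos_zero, Real.sin_zero]; norm_num
      refine le_trans (Finset.card_le_card (fun k hk => ?_))
        (by simp : ({1,2} : Finset ℕ).card ≤ 2)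
      simp only [Finset.mem_filter, Finset.mem_range] at hk
      obtain ⟨hk3, hp⟩ := hk
      interval_cases k
      · exact absurd hp h0
      · simp
      · simp
  -- m = 4
  · refine ⟨(EuclideanSpace.equiv (Fin 3) ℝ).symm ![-(2/3),-(2/3),1/3], ?_, ?_, ?_⟩
    · rw [norm_abc]; norm_num
    · rw [apply_two]; norm_num
    · have h0 : ¬ 0 < ⟪((EuclideanSpace.equiv (Fin 3) ℝ).symm ![-(2/3),-(2/3),1/3] :
          EuclideanSpace ℝ (Fin 3)), ringLight (2 * Real.pi * (0:ℕ) / (4:ℕ))⟫ := by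
        apply not_pos_inner
        have : (2 * Real.pi * ((0:ℕ):ℝ) / ((4:ℕ):ℝ)) = 0 := by push_cast; ring
        rw [this, Real.cos_zero, Real.sin_zero]; norm_num
      have h1 : ¬ 0 < ⟪((EuclideanSpace.equiv (Fin 3) ℝ).symm ![-(2/3),-(2/3),1/3] :
          EuclideanSpace ℝ (Fin 3)), ringLight (2 * Real.pi * (1:ℕ) / (4:ℕ))⟫ := by
        apply not_pos_inner
        have : (2 * Real.pi * ((1:ℕ):ℝ) / ((4:ℕ):ℝ)) = Real.pi / 2 := by push_cast; ring
        rw [this, Real.cos_pi_div_two, Real.sin_pi_div_two]; norm_num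
      refine le_trans (Finset.card_le_card (fun k hk => ?_))
        (by simp : ({2,3} : Finset ℕ).card ≤ 2)
      simp only [Finset.mem_filter, Finset.mem_range] at hk
      obtain ⟨hk4, hp⟩ := hk
      interval_cases k
      · exact absurd hp h0
      · exact absurd hp h1
      · simp
      · simp
  -- m = 5
  · have h5 : Real.sqrt 5 ^ 2 = 5 := Real.sq_sqrt (by norm_num)
    have h15 : Real.sqrt 15 ^ 2 = 15 := Real.sq_sqrt (by norm_num)
    have h75 : Real.sqrt 15 * Real.sqrt 5 = Real.sqrt 75 := by
      rw [← Real.sqrt_mul (by norm_num)]; norm_num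
    have h75' : Real.sqrt 75 ^ 2 = 75 := Real.sq_sqrt (by norm_num)
    have h15lb : (1:ℝ) ≤ Real.sqrt 15 := by
      nlinarith [Real.sqrt_nonneg 15]
    have h15ub : Real.sqrt 15 ≤ 3.9 := by
      nlinarith [Real.sqrt_nonneg 15]
    have h75lb : (8.6:ℝ) ≤ Real.sqrt 75 := by
      nlinarith [Real.sqrt_nonneg 75]
    have hc25 : Real.cos (2 * Real.pi / 5) = (Real.sqrt 5 - 1) / 4 := by
      have : (2 * Real.pi / 5) = 2 * (Real.pi / 5) := by ring
      rw [this, Real.cos_two_mul, Real.cos_pi_div_five]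
      nlinarith
    have hc35 : Real.cos (3 * Real.pi / 5) = -((Real.sqrt 5 - 1) / 4) := by
      have : (3 * Real.pi / 5) = Real.pi - 2 * Real.pi / 5 := by ring
      rw [this, Real.cos_pi_sub, hc25]
    set a : ℝ := Real.sqrt 15 / 4 * Real.cos (Real.pi / 5) with ha
    set b : ℝ := Real.sqrt 15 / 4 * Real.sin (Real.pi / 5) with hb
    have key : ∀ θ, a * Real.cos θ + b * Real.sin θ + 1/4
        = Real.sqrt 15 / 4 * Real.cos (θ - Real.pi / 5) + 1/4 := by
      intro θ
      rw [Real.cos_sub, ha, hb]; ring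
    refine ⟨(EuclideanSpace.equiv (Fin 3) ℝ).symm ![a,b,1/4], ?_, ?_, ?_⟩
    · rw [norm_abc]
      have hsc := Real.sin_sq_add_cos_sq (Real.pi / 5)
      have : a^2 + b^2 + (1/4:ℝ)^2 = 1 := by
        rw [ha, hb]; nlinarith
      rw [this, Real.sqrt_one]
    · rw [apply_two]; norm_num
    · have hneg35 : Real.sqrt 15 / 4 * Real.cos (3 * Real.pi / 5) + 1/4 ≤ 0 := by
        rw [hc35]
        have : Real.sqrt 15 * (Real.sqrt 5 - 1) = Real.sqrt 75 - Real.sqrt 15 := by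
          rw [← h75]; ring
        nlinarith
      have h2 : ¬ 0 < ⟪((EuclideanSpace.equiv (Fin 3) ℝ).symm ![a,b,1/4] :
          EuclideanSpace ℝ (Fin 3)), ringLight (2 * Real.pi * (2:ℕ) / (5:ℕ))⟫ := by
        apply not_pos_inner
        rw [key]
        have : (2 * Real.pi * ((2:ℕ):ℝ) / ((5:ℕ):ℝ)) - Real.pi / 5 = 3 * Real.pi / 5 := by
          push_cast; ring
        rw [this]; exact hneg35
      have h3 : ¬ 0 < ⟪((EuclideanSpace.equiv (Fin 3) ℝ).symm ![a,b,1/4] :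
          EuclideanSpace ℝ (Fin 3)), ringLight (2 * Real.pi * (3:ℕ) / (5:ℕ))⟫ := by
        apply not_pos_inner
        rw [key]
        have : (2 * Real.pi * ((3:ℕ):ℝ) / ((5:ℕ):ℝ)) - Real.pi / 5 = Real.pi := by
          push_cast; ring
        rw [this, Real.cos_pi]
        nlinarith
      have h4 : ¬ 0 < ⟪((EuclideanSpace.equiv (Fin 3) ℝ).symm ![a,b,1/4] :
          EuclideanSpace ℝ (Fin 3)), ringLight (2 * Real.pi * (4:ℕ) / (5:ℕ))⟫ := by
        apply not_pos_inner
        rw [key]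
        have : (2 * Real.pi * ((4:ℕ):ℝ) / ((5:ℕ):ℝ)) - Real.pi / 5
            = -(3 * Real.pi / 5) + 2 * Real.pi := by push_cast; ring
        rw [this, Real.cos_add_two_pi, Real.cos_neg]
        exact hneg35
      refine le_trans (Finset.card_le_card (fun k hk => ?_))
        (by simp : ({0,1} : Finset ℕ).card ≤ 2)
      simp only [Finset.mem_filter, Finset.mem_range] at hk
      obtain ⟨hk5, hp⟩ := hk
      interval_cases k
      · simp
      · simp
      · exact absurd hp h2
      · exact absurd hp h3
      · exact absurd hp h4
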